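/- Let G be a simple undirected graph on the finite vertex set V = {1, …, n}, and for each i ∈ V let H_i be the star graph on V whose edge set is {{i, j} : {i, j} ∈ E(G)}. Then for every integer k with 2 ≤ k ≤ n: G contains a clique of size at least k if and only if there exist a nonempty subset S ⊆ V and a k-element subset C ⊆ {1, …, n} such that (1/k)·Σ_{i ∈ C} d_m(S, H_i) ≥ 1. -/

import Mathlib

open scoped Classical
open Finset

/-- The degree of `u` in the subgraph of `G` induced by the vertex set `S`. -/
noncomputable def degIn {n : ℕ} (G : SimpleGraph (Fin n)) (S : Finset (Fin n)) (u : Fin n) : ℕ :=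
  (S.filter fun v => G.Adj u v).card

/-- The number of edges of the subgraph of `G` induced by `S`. -/
noncomputable def edgesIn {n : ℕ} (G : SimpleGraph (Fin n)) (S : Finset (Fin n)) : ℕ :=
  ((S ×ˢ S).filter fun p => p.1 < p.2 ∧ G.Adj p.1 p.2).card

/-- Minimum density `d_m(S, G)`: the minimum degree in the induced subgraph `G[S]`. -/
noncomputable def minDensity {n : ℕ} (G : SimpleGraph (Fin n)) (S : Finset (Fin n)) : ℕ :=
  sInf ((fun u => degIn G S u) '' (S : Set (Fin n)))

/-- Average density `d_a(S, G) = 2·|E(G[S])| / |S|`. -/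
noncomputable def avgDensity {n : ℕ} (G : SimpleGraph (Fin n)) (S : Finset (Fin n)) : ℝ :=
  2 * (edgesIn G S : ℝ) / (S.card : ℝ)

/-- The star snapshot `H_i`: the graph on the vertices of `G` whose edge set is
`{{i, j} : {i, j} ∈ E(G)}`. -/
def starAt {n : ℕ} (G : SimpleGraph (Fin n)) (i : Fin n) : SimpleGraph (Fin n) where
  Adj a b := (a = i ∧ G.Adj i b) ∨ (b = i ∧ G.Adj a i)
  symm := by
    constructor
    intro a b h
    rcases h with ⟨ha, hadj⟩ | ⟨hb, hadj⟩
    · exact Or.inr ⟨ha, hadj.symm⟩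
    · exact Or.inl ⟨hb, hadj.symm⟩
  loopless := by
    constructor
    intro a h
    rcases h with ⟨ha, hadj⟩ | ⟨ha, hadj⟩
    · subst ha; exact G.irrefl hadj
    · subst ha; exact G.irrefl hadj

lemma minDensity_le_of_mem {n : ℕ} (G : SimpleGraph (Fin n)) (S : Finset (Fin n)) {u : Fin n}
    (hu : u ∈ S) : minDensity G S ≤ degIn G S u :=
  Nat.sInf_le ⟨u, by simpa using hu, rfl⟩

lemma one_le_minDensity {n : ℕ} (G : SimpleGraph (Fin n)) (S : Finset (Fin n))
    (hne : S.Nonempty) (h : ∀ u ∈ S, 1 ≤ degIn G S u) : 1 ≤ minDensity G S := by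
  obtain ⟨w, hw⟩ := hne
  have hmem := Nat.sInf_mem (s := (fun u => degIn G S u) '' (S : Set (Fin n)))
    ⟨degIn G S w, ⟨w, by simpa using hw, rfl⟩⟩
  obtain ⟨u, hu, hEq⟩ := hmem
  rw [minDensity, ← hEq]
  exact h u (by simpa using hu)

/-- Correctness of the reduction from Maximum Clique for the O²BFF-am problem:
`G` has a clique of size at least `k` iff there are a nonempty `S ⊆ V` and a `k`-element set
`C` of star snapshots with `(1/k) · Σ_{i ∈ C} d_m(S, H_i) ≥ 1`. -/
theorem o2bff_am_clique_reduction {n : ℕ} (G : SimpleGraph (Fin n)) (k : ℕ)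
    (hk2 : 2 ≤ k) (hkn : k ≤ n) :
    (∃ K : Finset (Fin n), k ≤ K.card ∧ G.IsClique (K : Set (Fin n))) ↔
      ∃ (S C : Finset (Fin n)), S.Nonempty ∧ C.card = k ∧
        (1 : ℝ) ≤ (1 / (k : ℝ)) * ∑ i ∈ C, (minDensity (starAt G i) S : ℝ) := by
  have hk0 : (0 : ℝ) < (k : ℝ) := by exact_mod_cast Nat.lt_of_lt_of_le Nat.zero_lt_two hk2
  constructor
  · rintro ⟨K, hKcard, hK⟩
    obtain ⟨S, hSK, hScard⟩ := Finset.exists_subset_card_eq hKcard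
    have hS : G.IsClique (S : Set (Fin n)) := hK.subset (by exact_mod_cast hSK)
    have hSne : S.Nonempty := by rw [← Finset.card_pos, hScard]; omega
    refine ⟨S, S, hSne, hScard, ?_⟩
    have hmin : ∀ i ∈ S, 1 ≤ minDensity (starAt G i) S := by
      intro i hi
      refine one_le_minDensity _ _ hSne ?_
      intro u hu
      rw [degIn, Finset.one_le_card]
      by_cases hui : u = i
      · subst hui
        obtain ⟨w, hw, hwu⟩ := Finset.exists_mem_ne (by rw [hScard]; omega) u
        exact ⟨w, Finset.mem_filter.mpr ⟨hw, Or.inl ⟨rfl, hS hu hw (Ne.symm hwu)⟩⟩⟩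
      · exact ⟨i, Finset.mem_filter.mpr ⟨hi, Or.inr ⟨rfl, hS hu hi hui⟩⟩⟩
    have hsum : (k : ℝ) ≤ ∑ i ∈ S, (minDensity (starAt G i) S : ℝ) := by
      calc (k : ℝ) = ∑ _i ∈ S, (1 : ℝ) := by simp [hScard]
        _ ≤ _ := Finset.sum_le_sum fun i hi => by exact_mod_cast hmin i hi
    rw [one_div, inv_mul_eq_div, le_div_iff₀ hk0, one_mul]
    exact hsum
  · rintro ⟨S, C, hSne, hCcard, hsum⟩
    have hle : ∀ i ∈ C, minDensity (starAt G i) S ≤ 1 := by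
      intro i _
      by_cases h : ∃ u ∈ S, u ≠ i
      · obtain ⟨u, hu, hui⟩ := h
        refine le_trans (minDensity_le_of_mem _ _ hu) ?_
        rw [degIn]
        refine le_trans (Finset.card_le_card (fun v hv => ?_)) (Finset.card_singleton i).le
        simp only [Finset.mem_filter] at hv
        rcases hv.2 with ⟨h1, _⟩ | ⟨h2, _⟩
        · exact absurd h1 hui
        · simp [h2]
      · push_neg at h
        obtain ⟨u, hu⟩ := hSne
        refine le_trans (minDensity_le_of_mem _ _ hu) ?_
        calc degIn (starAt G i) S u ≤ S.card :=
              Finset.card_le_card (Finset.filter_subset _ _)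
          _ ≤ 1 := Finset.card_le_one.mpr fun a ha b hb => by rw [h a ha, h b hb]
    have hsum' : (k : ℝ) ≤ ∑ i ∈ C, (minDensity (starAt G i) S : ℝ) := by
      rw [one_div, inv_mul_eq_div, le_div_iff₀ hk0, one_mul] at hsum
      exact hsum
    have hsumN : k ≤ ∑ i ∈ C, minDensity (starAt G i) S := by exact_mod_cast hsum'
    have heq : ∀ i ∈ C, minDensity (starAt G i) S = 1 := by
      by_contra hcon
      push_neg at hcon
      obtain ⟨i, hi, hne⟩ := hcon
      have hlt : minDensity (starAt G i) S < 1 := lt_of_le_of_ne (hle i hi) hne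
      have : ∑ j ∈ C, minDensity (starAt G j) S < ∑ _j ∈ C, 1 :=
        Finset.sum_lt_sum (fun j hj => hle j hj) ⟨i, hi, hlt⟩
      rw [Finset.sum_const, smul_eq_mul, mul_one, hCcard] at this
      omega
    have key : ∀ i ∈ C, ∀ u ∈ S, u ≠ i → G.Adj u i ∧ i ∈ S := by
      intro i hi u hu hui
      have h1 : 1 ≤ degIn (starAt G i) S u := by
        have h2 := minDensity_le_of_mem (starAt G i) S hu
        rwa [heq i hi] at h2
      rw [degIn, Finset.one_le_card] at h1
      obtain ⟨v, hv⟩ := h1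
      simp only [Finset.mem_filter] at hv
      rcases hv.2 with ⟨h1, _⟩ | ⟨h2, hadj⟩
      · exact absurd h1 hui
      · exact ⟨hadj, h2 ▸ hv.1⟩
    have hCS : ∀ i ∈ C, i ∈ S := by
      intro i hi
      obtain ⟨u, hu⟩ := hSne
      by_cases hui : u = i
      · exact hui ▸ hu
      · exact (key i hi u hu hui).2
    refine ⟨C, hCcard.ge, ?_⟩
    intro i hi j hj hij
    have hiC : i ∈ C := by simpa using hi
    have hjC : j ∈ C := by simpa using hj
    exact ((key j hjC i (hCS i hiC) hij).1)
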